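/- Let k be a positive integer divisible by 2, 3, 5 and 11, and coprime to 7 and to 13. Then n = 36·k/55 is a positive integer satisfying φ(n+k) = 2·φ(n), where φ denotes Euler's totient function. -/
import Mathlib

theorem special_solution_36_55
    (k : ℕ) (hk : 0 < k)
    (h2 : 2 ∣ k) (h3 : 3 ∣ k) (h5 : 5 ∣ k) (h11 : 11 ∣ k)
    (h7 : Nat.Coprime 7 k) (h13 : Nat.Coprime 13 k) :
    0 < 36 * k / 55 ∧
    Nat.totient (36 * k / 55 + k) = 2 * Nat.totient (36 * k / 55) := by
  have h6 : 6 ∣ k := (Nat.Coprime.mul_dvd_of_dvd_of_dvd (by norm_num) h2 h3)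
  have h30 : 30 ∣ k := (Nat.Coprime.mul_dvd_of_dvd_of_dvd (by norm_num) h6 h5)
  have h330 : 330 ∣ k := (Nat.Coprime.mul_dvd_of_dvd_of_dvd (by norm_num) h30 h11)
  obtain ⟨m, rfl⟩ := h330
  have hm : 0 < m := by omega
  have hdiv : 36 * (330 * m) / 55 = 216 * m := by
    rw [show 36 * (330 * m) = 55 * (216 * m) by ring,
      Nat.mul_div_cancel_left _ (by norm_num)]
  rw [hdiv]
  refine ⟨by positivity, ?_⟩
  have hm7 : Nat.Coprime 7 m := h7.coprime_dvd_right (dvd_mul_left m 330)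
  have hm13 : Nat.Coprime 13 m := h13.coprime_dvd_right (dvd_mul_left m 330)
  have hco : Nat.Coprime 91 (6 * m) := by
    have c7 : Nat.Coprime 7 (6 * m) := (Nat.coprime_mul_iff_right).2 ⟨by norm_num, hm7⟩
    have c13 : Nat.Coprime 13 (6 * m) := (Nat.coprime_mul_iff_right).2 ⟨by norm_num, hm13⟩
    exact (Nat.coprime_mul_iff_left).2 ⟨c7, c13⟩
  rw [show 216 * m + 330 * m = 91 * (6 * m) by ring,
    Nat.totient_mul hco, show Nat.totient 91 = 72 from by decide]
  have e2 : (2 : ℕ).Prime := by norm_num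
  have e3 : (3 : ℕ).Prime := by norm_num
  have h1 : Nat.totient (216 * m) = 2 * Nat.totient (108 * m) := by
    rw [show 216 * m = 2 * (108 * m) by ring,
      Nat.totient_mul_of_prime_of_dvd e2 ⟨54 * m, by ring⟩]
  have h2' : Nat.totient (108 * m) = 2 * Nat.totient (54 * m) := by
    rw [show 108 * m = 2 * (54 * m) by ring,
      Nat.totient_mul_of_prime_of_dvd e2 ⟨27 * m, by ring⟩]
  have h3' : Nat.totient (54 * m) = 3 * Nat.totient (18 * m) := by
    rw [show 54 * m = 3 * (18 * m) by ring,
      Nat.totient_mul_of_prime_of_dvd e3 ⟨6 * m, by ring⟩]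
  have h4' : Nat.totient (18 * m) = 3 * Nat.totient (6 * m) := by
    rw [show 18 * m = 3 * (6 * m) by ring,
      Nat.totient_mul_of_prime_of_dvd e3 ⟨2 * m, by ring⟩]
  rw [h1, h2', h3', h4']
  ring
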